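/- Let Γ be the semidirect product (ℚ³ ⊕ ℚ³) ⋊ SL(3,ℚ), and let n ∈ ℕ. If every group homomorphism from SL(3,ℚ) to the unitary group U(n) of n×n complex matrices is trivial, then every group homomorphism from Γ to U(n) is trivial. -/

import Mathlib

open Matrix

/-- The additive group `R³ ⊕ R³`. -/
abbrev VV (R : Type*) := (Fin 3 → R) × (Fin 3 → R)

/-- Transpose, as a map on `SL(3,R)`. -/
def transposeSL {R : Type*} [CommRing R] (A : Matrix.SpecialLinearGroup (Fin 3) R) :
    Matrix.SpecialLinearGroup (Fin 3) R :=
  ⟨A.val.transpose, by rw [Matrix.det_transpose]; exact A.prop⟩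

/-- The group homomorphism `A ↦ (Aᵀ)⁻¹` on `SL(3,R)`. -/
def dualHom {R : Type*} [CommRing R] :
    Matrix.SpecialLinearGroup (Fin 3) R →* Matrix.SpecialLinearGroup (Fin 3) R where
  toFun A := (transposeSL A)⁻¹
  map_one' := by
    show (transposeSL 1)⁻¹ = 1
    rw [show transposeSL (1 : Matrix.SpecialLinearGroup (Fin 3) R) = 1 from
      Subtype.ext Matrix.transpose_one, inv_one]
  map_mul' A B := by
    show (transposeSL (A * B))⁻¹ = (transposeSL A)⁻¹ * (transposeSL B)⁻¹
    have h : transposeSL (A * B) = transposeSL B * transposeSL A :=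
      Subtype.ext (by simp [transposeSL, Matrix.transpose_mul]; rfl)
    rw [h, _root_.mul_inv_rev]

/-- The multiplicative group structure that `AddAut` carried in older Mathlib
(composition as multiplication), restored here. -/
instance AddAut.oldGroup {A : Type*} [Add A] : Group (AddAut A) where
  mul g h := AddEquiv.trans h g
  one := AddEquiv.refl _
  inv := AddEquiv.symm
  mul_assoc _ _ _ := rfl
  one_mul _ := rfl
  mul_one _ := rfl
  inv_mul_cancel := AddEquiv.self_trans_symm

/-- Linear automorphisms as additive automorphisms, as a group homomorphism. -/
def linToAddAut {R : Type*} [CommRing R] :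
    ((Fin 3 → R) ≃ₗ[R] (Fin 3 → R)) →* AddAut (Fin 3 → R) where
  toFun e := e.toAddEquiv
  map_one' := rfl
  map_mul' _ _ := rfl

/-- Pairs of additive automorphisms give additive automorphisms of the product. -/
def addAutProd {R : Type*} [CommRing R] :
    AddAut (Fin 3 → R) × AddAut (Fin 3 → R) →* AddAut (VV R) where
  toFun p := AddEquiv.prodCongr p.1 p.2
  map_one' := rfl
  map_mul' _ _ := rfl

/-- The action of `SL(3,R)` on `R³ ⊕ R³` given by `A · (x,y) = (Ax, (Aᵀ)⁻¹y)`,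
as a homomorphism into additive automorphisms. -/
noncomputable def sl3Act {R : Type*} [CommRing R] :
    Matrix.SpecialLinearGroup (Fin 3) R →* AddAut (VV R) :=
  addAutProd.comp
    (((linToAddAut.comp Matrix.SpecialLinearGroup.toLin')).prod
      ((linToAddAut.comp Matrix.SpecialLinearGroup.toLin').comp dualHom))

/-- Additive automorphisms as multiplicative automorphisms of `Multiplicative`. -/
def addAutToMulAut {A : Type*} [AddGroup A] : AddAut A →* MulAut (Multiplicative A) where
  toFun e := AddEquiv.toMultiplicative e
  map_one' := rfl
  map_mul' _ _ := rfl

/-- The action of `SL(3,R)` on `Multiplicative (R³ ⊕ R³)`. -/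
noncomputable def sl3ActM (R : Type*) [CommRing R] :
    Matrix.SpecialLinearGroup (Fin 3) R →* MulAut (Multiplicative (VV R)) :=
  addAutToMulAut.comp sl3Act

/-- The group `Γ_R = (R³ ⊕ R³) ⋊ SL(3,R)`. -/
abbrev GammaR (R : Type*) [CommRing R] :=
  SemidirectProduct (Multiplicative (VV R)) (Matrix.SpecialLinearGroup (Fin 3) R) (sl3ActM R)

/-- Coordinatewise integer casting `ℤ³ → ℚ³` as an additive homomorphism. -/
def intCast3 : (Fin 3 → ℤ) →+ (Fin 3 → ℚ) := (Int.castAddHom ℚ).compLeft (Fin 3)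

/-- The inclusion `ℤ³ ⊕ ℤ³ → ℚ³ ⊕ ℚ³`. -/
def intVec : VV ℤ →+ VV ℚ := intCast3.prodMap intCast3

/-- The subgroup `Λ = ℤ³ ⊕ ℤ³` of `Γ = (ℚ³ ⊕ ℚ³) ⋊ SL(3,ℚ)`. -/
noncomputable def LambdaSub : Subgroup (GammaR ℚ) :=
  (AddSubgroup.toSubgroup intVec.range).map SemidirectProduct.inl

/-- The dot product on `R³`. -/
def dotR {R : Type*} [CommRing R] (x y : Fin 3 → R) : R := ∑ i, x i * y i

/-- The 2-cocycle `Ω_α` on `ℚ³ ⊕ ℚ³`. -/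
noncomputable def OmegaQ (α : ℝ) (g h : VV ℚ) : Circle :=
  Circle.exp (2 * Real.pi * α * ((dotR g.1 h.2 - dotR g.2 h.1 : ℚ) : ℝ))

/-- The extension `Ω̃_α` of `Ω_α` to `Γ = (ℚ³ ⊕ ℚ³) ⋊ SL(3,ℚ)`. -/
noncomputable def OmegaT (α : ℝ) (g h : GammaR ℚ) : Circle :=
  OmegaQ α (Multiplicative.toAdd g.left) (sl3Act g.right (Multiplicative.toAdd h.left))


lemma sl3Act_eq (A : Matrix.SpecialLinearGroup (Fin 3) ℚ) (v : VV ℚ) :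
    sl3Act A v = (A.val.mulVec v.1, (dualHom A).val.mulVec v.2) := by
  simp [sl3Act, addAutProd, linToAddAut, Matrix.SpecialLinearGroup.toLin'_apply,
    Matrix.toLin'_apply]
  rfl

lemma dualHom_diag (d d' : Fin 3 → ℚ) (h : (Matrix.diagonal d).det = 1)
    (h' : (Matrix.diagonal d').det = 1) (hdd' : ∀ j, d j * d' j = 1) :
    dualHom (⟨Matrix.diagonal d, h⟩ : Matrix.SpecialLinearGroup (Fin 3) ℚ)
      = ⟨Matrix.diagonal d', h'⟩ := by
  show (transposeSL _)⁻¹ = _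
  have ht : transposeSL (⟨Matrix.diagonal d, h⟩ : Matrix.SpecialLinearGroup (Fin 3) ℚ)
      = ⟨Matrix.diagonal d, h⟩ := Subtype.ext (by simp [transposeSL])
  rw [ht]
  symm
  apply eq_inv_of_mul_eq_one_right
  apply Subtype.ext
  show Matrix.diagonal d * Matrix.diagonal d' = (1 : Matrix (Fin 3) (Fin 3) ℚ)
  rw [Matrix.diagonal_mul_diagonal]
  have : (fun i => d i * d' i) = fun _ => (1:ℚ) := funext hdd'
  rw [this]
  exact Matrix.diagonal_one

lemma diag_mulVec_single (d : Fin 3 → ℚ) (i : Fin 3) (q : ℚ) :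
    (Matrix.diagonal d).mulVec (Pi.single i q) = Pi.single i (d i * q) := by
  funext j
  rw [Matrix.mulVec_diagonal]
  rcases eq_or_ne j i with rfl | hji
  · simp
  · simp [Pi.single_eq_of_ne hji]

/-- If every homomorphism `SL(3,ℚ) →* U(n)` is trivial, then every
homomorphism `Γ →* U(n)` is trivial, where `Γ = (ℚ³ ⊕ ℚ³) ⋊ SL(3,ℚ)`. -/
theorem gamma_rep_trivial_of_SL3_rep_trivial (n : ℕ)
    (h : ∀ ρ : Matrix.SpecialLinearGroup (Fin 3) ℚ →* Matrix.unitaryGroup (Fin n) ℂ,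
      ∀ A, ρ A = 1)
    (π : GammaR ℚ →* Matrix.unitaryGroup (Fin n) ℂ) (g : GammaR ℚ) :
    π g = 1 := by
  classical
  have hSL : ∀ A, π (SemidirectProduct.inr A) = 1 := h (π.comp SemidirectProduct.inr)
  set f : Multiplicative (VV ℚ) →* Matrix.unitaryGroup (Fin n) ℂ :=
    π.comp SemidirectProduct.inl with hfdef
  have hinv : ∀ (A : Matrix.SpecialLinearGroup (Fin 3) ℚ) (v : VV ℚ),
      f (Multiplicative.ofAdd (sl3Act A v)) = f (Multiplicative.ofAdd v) := by
    intro A v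
    have h1 : (SemidirectProduct.inl (sl3ActM ℚ A (Multiplicative.ofAdd v)) : GammaR ℚ)
        = SemidirectProduct.inr A * SemidirectProduct.inl (Multiplicative.ofAdd v)
          * SemidirectProduct.inr A⁻¹ := SemidirectProduct.inl_aut A _
    have h3 : sl3ActM ℚ A (Multiplicative.ofAdd v) = Multiplicative.ofAdd (sl3Act A v) := rfl
    rw [h3] at h1
    have h2 := congrArg π h1
    simp only [_root_.map_mul, hSL, one_mul, mul_one, map_inv, inv_one] at h2
    exact h2
  have sq_one : ∀ w : VV ℚ, f (Multiplicative.ofAdd (w + w)) = f (Multiplicative.ofAdd w) →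
      f (Multiplicative.ofAdd w) = 1 := by
    intro w hw
    have : f (Multiplicative.ofAdd w) * f (Multiplicative.ofAdd w)
        = f (Multiplicative.ofAdd w) := by
      rw [← _root_.map_mul]; exact hw
    exact mul_eq_left.mp this
  -- first component single coordinates
  have main1 : ∀ (d : Fin 3 → ℚ), (Matrix.diagonal d).det = 1 → ∀ (i : Fin 3), d i = 2 →
      ∀ q : ℚ, f (Multiplicative.ofAdd ((Pi.single i q, 0) : VV ℚ)) = 1 := by
    intro d hdet i hdi q
    apply sq_one
    have hact := hinv ⟨Matrix.diagonal d, hdet⟩ (Pi.single i q, 0)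
    erw [sl3Act_eq] at hact
    simp only [Matrix.mulVec_zero] at hact
    have : (Matrix.diagonal d).mulVec (Pi.single i q) = Pi.single i (2 * q) := by
      rw [diag_mulVec_single, hdi]
    rw [this] at hact
    have hps : ((Pi.single i q, 0) : VV ℚ) + (Pi.single i q, 0) = (Pi.single i (2 * q), 0) := by
      rw [Prod.mk_add_mk, add_zero, ← Pi.single_add, two_mul]
    rw [hps]
    exact hact
  -- second component single coordinates
  have main2 : ∀ (d d' : Fin 3 → ℚ) (hd : (Matrix.diagonal d).det = 1)
      (hd' : (Matrix.diagonal d').det = 1), (∀ j, d j * d' j = 1) → ∀ (i : Fin 3), d' i = 2 →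
      ∀ q : ℚ, f (Multiplicative.ofAdd ((0, Pi.single i q) : VV ℚ)) = 1 := by
    intro d d' hd hd' hdd' i hdi q
    apply sq_one
    have hact := hinv ⟨Matrix.diagonal d, hd⟩ (0, Pi.single i q)
    erw [sl3Act_eq, dualHom_diag d d' hd hd' hdd'] at hact
    simp only [Matrix.mulVec_zero] at hact
    have : (Matrix.diagonal d').mulVec (Pi.single i q) = Pi.single i (2 * q) := by
      rw [diag_mulVec_single, hdi]
    rw [this] at hact
    have hps : ((0, Pi.single i q) : VV ℚ) + (0, Pi.single i q) = (0, Pi.single i (2 * q)) := by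
      rw [Prod.mk_add_mk, add_zero, ← Pi.single_add, two_mul]
    rw [hps]
    exact hact
  have single1 : ∀ (i : Fin 3) (q : ℚ),
      f (Multiplicative.ofAdd ((Pi.single i q, 0) : VV ℚ)) = 1 := by
    intro i q
    fin_cases i
    · exact main1 ![2, 2⁻¹, 1] (by norm_num [Matrix.det_diagonal, Fin.prod_univ_three, Matrix.cons_val_two]) 0
        (by norm_num [Matrix.cons_val_two]) q
    · exact main1 ![2⁻¹, 2, 1] (by norm_num [Matrix.det_diagonal, Fin.prod_univ_three, Matrix.cons_val_two]) 1
        (by norm_num [Matrix.cons_val_two]) q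
    · exact main1 ![2⁻¹, 1, 2] (by norm_num [Matrix.det_diagonal, Fin.prod_univ_three, Matrix.cons_val_two]) 2
        (by norm_num [Matrix.cons_val_two]) q
  have single2 : ∀ (i : Fin 3) (q : ℚ),
      f (Multiplicative.ofAdd ((0, Pi.single i q) : VV ℚ)) = 1 := by
    intro i q
    fin_cases i
    · exact main2 ![2⁻¹, 2, 1] ![2, 2⁻¹, 1]
        (by norm_num [Matrix.det_diagonal, Fin.prod_univ_three, Matrix.cons_val_two])
        (by norm_num [Matrix.det_diagonal, Fin.prod_univ_three, Matrix.cons_val_two])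
        (by intro j; fin_cases j <;> norm_num [Matrix.cons_val_two]) 0 (by norm_num [Matrix.cons_val_two]) q
    · exact main2 ![2, 2⁻¹, 1] ![2⁻¹, 2, 1]
        (by norm_num [Matrix.det_diagonal, Fin.prod_univ_three, Matrix.cons_val_two])
        (by norm_num [Matrix.det_diagonal, Fin.prod_univ_three, Matrix.cons_val_two])
        (by intro j; fin_cases j <;> norm_num [Matrix.cons_val_two]) 1 (by norm_num [Matrix.cons_val_two]) q
    · exact main2 ![2, 1, 2⁻¹] ![2⁻¹, 1, 2]
        (by norm_num [Matrix.det_diagonal, Fin.prod_univ_three, Matrix.cons_val_two])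
        (by norm_num [Matrix.det_diagonal, Fin.prod_univ_three, Matrix.cons_val_two])
        (by intro j; fin_cases j <;> norm_num [Matrix.cons_val_two]) 2 (by norm_num [Matrix.cons_val_two]) q
  have hx : ∀ x : Fin 3 → ℚ, f (Multiplicative.ofAdd ((x, 0) : VV ℚ)) = 1 := by
    intro x
    have hdec : ((x, 0) : VV ℚ) = (Pi.single 0 (x 0), 0) + (Pi.single 1 (x 1), 0)
        + (Pi.single 2 (x 2), 0) := by
      refine Prod.ext ?_ (by simp)
      show x = Pi.single 0 (x 0) + Pi.single 1 (x 1) + Pi.single 2 (x 2)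
      have := Finset.univ_sum_single x
      rw [Fin.sum_univ_three] at this
      exact this.symm
    rw [hdec, ofAdd_add, ofAdd_add, _root_.map_mul, _root_.map_mul,
      single1, single1, single1, mul_one, mul_one]
  have hy : ∀ y : Fin 3 → ℚ, f (Multiplicative.ofAdd ((0, y) : VV ℚ)) = 1 := by
    intro y
    have hdec : ((0, y) : VV ℚ) = (0, Pi.single 0 (y 0)) + (0, Pi.single 1 (y 1))
        + (0, Pi.single 2 (y 2)) := by
      refine Prod.ext (by simp) ?_
      show y = Pi.single 0 (y 0) + Pi.single 1 (y 1) + Pi.single 2 (y 2)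
      have := Finset.univ_sum_single y
      rw [Fin.sum_univ_three] at this
      exact this.symm
    rw [hdec, ofAdd_add, ofAdd_add, _root_.map_mul, _root_.map_mul,
      single2, single2, single2, mul_one, mul_one]
  have hall : ∀ v : VV ℚ, f (Multiplicative.ofAdd v) = 1 := by
    intro v
    have hdec : v = ((v.1, 0) : VV ℚ) + ((0, v.2) : VV ℚ) := by simp
    rw [hdec, ofAdd_add, _root_.map_mul, hx, hy, mul_one]
  calc π g = π (SemidirectProduct.inl g.left * SemidirectProduct.inr g.right) := by
        rw [SemidirectProduct.inl_left_mul_inr_right]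
    _ = f g.left * π (SemidirectProduct.inr g.right) := by rw [_root_.map_mul]; rfl
    _ = 1 := by rw [hSL, mul_one]; exact hall (Multiplicative.toAdd g.left)
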